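/- (Richardson) Let (W,S) be a Coxeter system and let I, J ⊆ S be subsets with W_I and W_J finite. Let w₀(I) and w₀(J) denote the longest elements of W_I and W_J, and suppose w₀(I) ∈ Z(W_I) and w₀(J) ∈ Z(W_J). Then w₀(I) and w₀(J) are conjugate in W if and only if I and J are conjugate in W, i.e., there exists w ∈ W with w I w⁻¹ = J (as subsets of W). -/

import Mathlib

namespace CoxRich
open CoxeterSystem List
open scoped Classical
set_option linter.unusedSectionVars false

lemma zmod2_addself (x : ZMod 2) : x + x = 0 := by
  revert x; decide

lemma zmod2_cases (x : ZMod 2) : x = 0 ∨ x = 1 := by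
  revert x; decide


variable {B W : Type*} [Group W] {M : CoxeterMatrix B} (cs : CoxeterSystem M W)

local prefix:100 "s" => cs.simple
local prefix:100 "π" => cs.wordProd
local prefix:100 "ℓ" => cs.length

/-- count mod 2 -/
noncomputable def zcount (t : W) (l : List W) : ZMod 2 :=
  (l.map (fun r => if r = t then (1 : ZMod 2) else 0)).sum

@[simp] lemma zcount_nil (t : W) : zcount t ([] : List W) = 0 := rfl

lemma zcount_cons (t r : W) (l : List W) :
    zcount t (r :: l) = (if r = t then 1 else 0) + zcount t l := by
  simp [zcount]

lemma zcount_append (t : W) (l₁ l₂ : List W) :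
    zcount t (l₁ ++ l₂) = zcount t l₁ + zcount t l₂ := by
  simp [zcount]

lemma zcount_eq_zero_of_not_mem {t : W} {l : List W} (h : t ∉ l) : zcount t l = 0 := by
  induction l with
  | nil => rfl
  | cons r l ih =>
    rw [zcount_cons, if_neg (by rintro rfl; exact h mem_cons_self),
      ih (fun hm => h (mem_cons_of_mem _ hm)), add_zero]

lemma mem_of_zcount_ne_zero {t : W} {l : List W} (h : zcount t l ≠ 0) : t ∈ l := by
  by_contra hm; exact h (zcount_eq_zero_of_not_mem hm)

lemma zcount_eq_one_of_nodup_mem {t : W} {l : List W} (hn : l.Nodup) (hm : t ∈ l) :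
    zcount t l = 1 := by
  induction l with
  | nil => simp at hm
  | cons r l ih =>
    rw [zcount_cons]
    rcases List.mem_cons.mp hm with rfl | hm'
    · rw [if_pos rfl, zcount_eq_zero_of_not_mem (List.nodup_cons.mp hn).1, add_zero]
    · rw [ih (List.nodup_cons.mp hn).2 hm', if_neg, zero_add]
      rintro rfl; exact (List.nodup_cons.mp hn).1 hm'

lemma zcount_map_of_injective {f : W → W} (hf : Function.Injective f) (t : W) (l : List W) :
    zcount (f t) (l.map f) = zcount t l := by
  induction l with
  | nil => rfl
  | cons r l ih =>
    rw [List.map_cons, zcount_cons, zcount_cons, ih]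
    congr 1
    by_cases h : r = t
    · rw [if_pos h, if_pos (by rw [h])]
    · rw [if_neg h, if_neg (fun hc => h (hf hc))]

lemma zcount_reverse (t : W) (l : List W) : zcount t l.reverse = zcount t l := by
  simp [zcount, List.sum_reverse]

/-- The basic involution on `W × ZMod 2` attached to a simple reflection. -/
noncomputable def sigmaFun (i : B) (p : W × ZMod 2) : W × ZMod 2 :=
  (s i * p.1 * s i, p.2 + if p.1 = s i then 1 else 0)

lemma sigmaFun_invol (i : B) : Function.Involutive (sigmaFun cs i) := by
  intro p
  unfold sigmaFun
  have h1 : s i * (s i * p.1 * s i) * s i = p.1 := by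
    rw [← mul_assoc, ← mul_assoc, cs.simple_mul_simple_self, one_mul, mul_assoc,
      cs.simple_mul_simple_self, mul_one]
  have h2 : (s i * p.1 * s i = s i) ↔ (p.1 = s i) := by
    constructor
    · intro h
      have := congrArg (fun x => s i * x * s i) h
      simpa [h1, cs.simple_mul_simple_self, ← mul_assoc] using this
    · rintro h; rw [h, cs.simple_mul_simple_self, one_mul]
  ext
  · exact h1
  · show p.2 + _ + _ = p.2
    by_cases h : p.1 = s i
    · rw [if_pos h, if_pos (h2.mpr h), add_assoc]
      norm_num
      decide
    · rw [if_neg h, if_neg (fun hc => h (h2.mp hc)), add_zero, add_zero]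

noncomputable def sigma (i : B) : Equiv.Perm (W × ZMod 2) := (sigmaFun_invol cs i).toPerm

lemma sigma_apply (i : B) (p : W × ZMod 2) : sigma cs i p = sigmaFun cs i p := rfl

/-- product of the sigmas along a word -/
noncomputable def pp (ω : List B) : Equiv.Perm (W × ZMod 2) := (ω.map (sigma cs)).prod

@[simp] lemma pp_nil : pp cs [] = 1 := rfl

lemma pp_cons (i : B) (ω : List B) : pp cs (i :: ω) = sigma cs i * pp cs ω := by
  simp [pp]

lemma rightInvSeq_cons (i : B) (ω : List B) :
    cs.rightInvSeq (i :: ω) = ((π ω)⁻¹ * s i * π ω) :: cs.rightInvSeq ω := rfl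

lemma pp_apply (ω : List B) (t : W) (e : ZMod 2) :
    pp cs ω (t, e) = (π ω * t * (π ω)⁻¹, e + zcount t (cs.rightInvSeq ω)) := by
  induction ω generalizing e with
  | nil => simp
  | cons i ω ih =>
    rw [pp_cons, Equiv.Perm.mul_apply, ih, sigma_apply, sigmaFun, rightInvSeq_cons,
      zcount_cons, cs.wordProd_cons]
    have hcond : (π ω * t * (π ω)⁻¹ = s i) ↔ ((π ω)⁻¹ * s i * π ω = t) := by
      constructor
      · rintro h; rw [← h]; group
      · rintro h; rw [← h]; group
    ext
    · show s i * (π ω * t * (π ω)⁻¹) * s i = s i * π ω * t * (s i * π ω)⁻¹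
      rw [mul_inv_rev, cs.inv_simple]; group
    · show e + _ + _ = e + (_ + _)
      by_cases h : π ω * t * (π ω)⁻¹ = s i
      · rw [if_pos h, if_pos (hcond.mp h)]; ring
      · rw [if_neg h, if_neg (fun hc => h (hcond.mpr hc))]; ring


/-! ### Alternating words and liftability -/

lemma aw_zero (i j : B) : alternatingWord i j 0 = [] := rfl

lemma aw_drop (i j : B) : ∀ (d n : ℕ),
    (alternatingWord i j n).drop d = alternatingWord i j (n - d) := by
  intro d
  induction d with
  | zero => simp
  | succ d ih =>
    intro n
    match n with
    | 0 => simp [aw_zero]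
    | Nat.succ m =>
      rw [alternatingWord_succ', List.drop_succ_cons, ih m]
      congr 1
      omega

lemma key_pow (i j : B) : ∀ k : ℕ,
    s j * (s i * s j) ^ k = ((s i * s j)⁻¹) ^ k * s j := by
  intro k
  induction k with
  | zero => simp
  | succ k ih =>
    rw [pow_succ, ← mul_assoc, ih, pow_succ, mul_assoc, mul_assoc]
    congr 1
    rw [mul_inv_rev, cs.inv_simple, cs.inv_simple]
    group

lemma F_lemma (i j : B) (q : ℕ) :
    (π (alternatingWord i j q))⁻¹ * π (alternatingWord i j (q + 1)) =
      ((s i * s j)⁻¹) ^ q * s j := by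
  rcases Nat.even_or_odd q with hq | hq
  · obtain ⟨c, rfl⟩ := hq
    have hd1 : (c + c) / 2 = c := by omega
    have hd2 : (c + c + 1) / 2 = c := by omega
    have h1 : π (alternatingWord i j (c + c)) = (s i * s j) ^ c := by
      rw [cs.prod_alternatingWord_eq_mul_pow, if_pos ⟨c, rfl⟩, one_mul, hd1]
    have h2 : π (alternatingWord i j (c + c + 1)) = s j * (s i * s j) ^ c := by
      rw [cs.prod_alternatingWord_eq_mul_pow, if_neg (by simp [Nat.even_add_one]), hd2]
    rw [h1, h2, key_pow cs i j c, ← mul_assoc, ← inv_pow, ← pow_add]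
  · obtain ⟨c, rfl⟩ := hq
    have hd1 : (2 * c + 1) / 2 = c := by omega
    have hd2 : (2 * c + 1 + 1) / 2 = c + 1 := by omega
    have h1 : π (alternatingWord i j (2 * c + 1)) = s j * (s i * s j) ^ c := by
      rw [cs.prod_alternatingWord_eq_mul_pow, if_neg (by simp [Nat.even_add_one, parity_simps]),
        hd1]
    have h2 : π (alternatingWord i j (2 * c + 1 + 1)) = (s i * s j) ^ (c + 1) := by
      rw [cs.prod_alternatingWord_eq_mul_pow, if_pos (by simp [parity_simps]), one_mul, hd2]
    rw [h1, h2, mul_inv_rev, cs.inv_simple, ← inv_pow, mul_assoc]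
    rw [show (s i * s j) ^ (c + 1) = s j * (s j * (s i * s j) ^ (c + 1)) by
      rw [← mul_assoc, cs.simple_mul_simple_self, one_mul]]
    rw [← mul_assoc (s j), cs.simple_mul_simple_self, one_mul, key_pow, ← mul_assoc, ← pow_add]
    congr 2
    omega

lemma aw_entry (i j : B) {n k : ℕ} (hk : k < n) :
    (cs.rightInvSeq (alternatingWord i j n)).getD k 1 = ((s i * s j)⁻¹) ^ (n - k - 1) * s j := by
  have hlen : (alternatingWord i j n).length = n := length_alternatingWord i j n
  have hsucc : n - k = (n - k - 1) + 1 := by omega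
  have hA : alternatingWord i j (n - k) =
      (if Even (n - k - 1) then j else i) :: alternatingWord i j (n - k - 1) := by
    rw [hsucc, alternatingWord_succ']
    simp only [Nat.add_sub_cancel]
  have hget : (alternatingWord i j n)[k]? = some (if Even (n - k - 1) then j else i) := by
    rw [List.getElem?_eq_getElem (by omega)]
    congr 1
    have h0 : (alternatingWord i j n)[k] = ((alternatingWord i j n).drop k)[0]'(by
        simp [hlen]; omega) := by
      rw [List.getElem_drop]
      norm_num
    rw [h0]
    simp_rw [aw_drop, hA]
    rfl
  have hnk : n - (k + 1) = n - k - 1 := by omega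
  rw [cs.getD_rightInvSeq, aw_drop, hnk, hget]
  have hπ : (Option.map cs.simple (some (if Even (n - k - 1) then j else i))).getD 1 *
      π (alternatingWord i j (n - k - 1)) = π (alternatingWord i j (n - k)) := by
    rw [hA, cs.wordProd_cons]
    rfl
  have hF := F_lemma cs i j (n - k - 1)
  rw [← hsucc] at hF
  rw [mul_assoc, hπ, hF]

lemma aw_pairing (i j : B) {m k : ℕ} (hm : (s i * s j) ^ m = 1) (hk : k < m) :
    (cs.rightInvSeq (alternatingWord i j (2 * m))).getD k 1 =
      (cs.rightInvSeq (alternatingWord i j (2 * m))).getD (m + k) 1 := by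
  rw [aw_entry cs i j (show k < 2 * m by omega), aw_entry cs i j (show m + k < 2 * m by omega)]
  have h1 : 2 * m - k - 1 = (m - k - 1) + m := by omega
  have h2 : 2 * m - (m + k) - 1 = m - k - 1 := by omega
  rw [h1, h2, pow_add, show (s i * s j)⁻¹ ^ m = 1 by rw [inv_pow, hm, inv_one], mul_one]

lemma zcount_ris_aw (i j : B) {m : ℕ} (hm : (s i * s j) ^ m = 1) (t : W) :
    zcount t (cs.rightInvSeq (alternatingWord i j (2 * m))) = 0 := by
  set l := cs.rightInvSeq (alternatingWord i j (2 * m)) with hl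
  have hlen : l.length = 2 * m := by
    rw [hl, cs.length_rightInvSeq, length_alternatingWord]
  have htd : l.take m = l.drop m := by
    apply List.ext_getElem
    · simp [hlen]; omega
    · intro k h1 h2
      rw [List.getElem_take, List.getElem_drop]
      rw [List.length_take, hlen] at h1
      have hk : k < m := by omega
      have := aw_pairing cs i j hm hk
      rwa [List.getD_eq_getElem l 1 (by omega), List.getD_eq_getElem l 1 (by omega)] at this
  have hsplit : l = l.take m ++ l.drop m := (List.take_append_drop m l).symm
  rw [hsplit, zcount_append, ← htd]
  exact zmod2_addself _

lemma pp_aw (i j : B) : ∀ m : ℕ,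
    pp cs (alternatingWord i j (2 * m)) = (sigma cs i * sigma cs j) ^ m := by
  intro m
  induction m with
  | zero => simp [aw_zero]
  | succ m ih =>
    have h1 : alternatingWord i j (2 * (m + 1)) = i :: j :: alternatingWord i j (2 * m) := by
      rw [show 2 * (m + 1) = (2 * m + 1) + 1 by ring, alternatingWord_succ',
        alternatingWord_succ']
      simp [Nat.even_add_one, parity_simps]
    rw [h1, pp_cons, pp_cons, ih, pow_succ', mul_assoc]

lemma liftable : M.IsLiftable (sigma cs) := by
  intro i j
  rcases eq_or_ne (M i j) 0 with h0 | h0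
  · rw [h0, pow_zero]
  · rw [← pp_aw]
    have hπ : π (alternatingWord i j (2 * M i j)) = 1 := by
      rw [cs.prod_alternatingWord_eq_mul_pow, if_pos (by simp [parity_simps]), one_mul,
        show 2 * M i j / 2 = M i j by omega, cs.simple_mul_simple_pow]
    apply Equiv.ext
    rintro ⟨t, e⟩
    rw [pp_apply, hπ, zcount_ris_aw cs i j (cs.simple_mul_simple_pow i j)]
    simp

/-! ### The cocycle -/

noncomputable def theta : W →* Equiv.Perm (W × ZMod 2) := cs.lift ⟨sigma cs, liftable cs⟩

lemma theta_simple (i : B) : theta cs (s i) = sigma cs i := cs.lift_apply_simple _ i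

lemma theta_wordProd (ω : List B) : theta cs (π ω) = pp cs ω := by
  induction ω with
  | nil => rw [cs.wordProd_nil, map_one, pp_nil]
  | cons i ω ih => rw [cs.wordProd_cons, map_mul, theta_simple, pp_cons, ih]

noncomputable def nn (w t : W) : ZMod 2 := (theta cs w (t, 0)).2

lemma nn_wordProd (ω : List B) (t : W) : nn cs (π ω) t = zcount t (cs.rightInvSeq ω) := by
  rw [nn, theta_wordProd, pp_apply, zero_add]

lemma theta_apply (w t : W) (e : ZMod 2) :
    theta cs w (t, e) = (w * t * w⁻¹, e + nn cs w t) := by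
  obtain ⟨ω, rfl⟩ := cs.wordProd_surjective w
  rw [theta_wordProd, pp_apply, nn_wordProd]

lemma nn_mul (a b t : W) : nn cs (a * b) t = nn cs b t + nn cs a (b * t * b⁻¹) := by
  have : theta cs (a * b) (t, 0) = theta cs a (theta cs b (t, 0)) := by
    rw [map_mul]; rfl
  show (theta cs (a * b) (t, 0)).2 = _
  rw [this, theta_apply, theta_apply]
  simp

lemma nn_one (t : W) : nn cs 1 t = 0 := by
  rw [nn, map_one]; rfl

lemma nn_inv (w t : W) : nn cs w⁻¹ t = nn cs w (w⁻¹ * t * w) := by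
  have h := nn_mul cs w⁻¹ w (w⁻¹ * t * w)
  rw [inv_mul_cancel, nn_one] at h
  have hc : w * (w⁻¹ * t * w) * w⁻¹ = t := by group
  rw [hc] at h
  have := zmod2_addself (nn cs w (w⁻¹ * t * w))
  calc nn cs w⁻¹ t = 0 + nn cs w⁻¹ t := by rw [zero_add]
    _ = nn cs w (w⁻¹ * t * w) + (nn cs w (w⁻¹ * t * w) + nn cs w⁻¹ t) := by
        rw [← add_assoc, this, zero_add]
    _ = nn cs w (w⁻¹ * t * w) := by rw [← h, add_zero]


/-! ### Inversions via the cocycle -/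

lemma zcount_map_conj (a t : W) (l : List W) :
    zcount t (l.map (fun r => a⁻¹ * r * a)) = zcount (a * t * a⁻¹) l := by
  induction l with
  | nil => rfl
  | cons r l ih =>
    rw [List.map_cons, zcount_cons, zcount_cons, ih]
    congr 1
    by_cases h : a⁻¹ * r * a = t
    · rw [if_pos h, if_pos (by rw [← h]; group)]
    · rw [if_neg h, if_neg (fun hc => h (by rw [hc]; group))]

lemma zcount_map_conj' (a t : W) (l : List W) :
    zcount t (l.map (fun r => a * r * a⁻¹)) = zcount (a⁻¹ * t * a) l := by
  have := zcount_map_conj a⁻¹ t l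
  rw [inv_inv] at this
  exact this

lemma ris_append (ω₁ ω₂ : List B) :
    cs.rightInvSeq (ω₁ ++ ω₂) =
      (cs.rightInvSeq ω₁).map (fun r => (π ω₂)⁻¹ * r * π ω₂) ++ cs.rightInvSeq ω₂ := by
  induction ω₁ with
  | nil => simp
  | cons i ω₁ ih =>
    rw [List.cons_append, rightInvSeq_cons, rightInvSeq_cons, ih, List.map_cons,
      List.cons_append]
    congr 1
    rw [cs.wordProd_append, mul_inv_rev]
    group

lemma lis_eq_map_ris (ω : List B) :
    cs.leftInvSeq ω = (cs.rightInvSeq ω).map (fun r => π ω * r * (π ω)⁻¹) := by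
  induction ω with
  | nil => simp
  | cons i ω ih =>
    have hl : cs.leftInvSeq (i :: ω) = s i :: (cs.leftInvSeq ω).map (MulAut.conj (s i)) := rfl
    rw [hl, rightInvSeq_cons, List.map_cons, ih, List.map_map]
    congr 1
    · rw [cs.wordProd_cons]
      simp [mul_assoc, mul_inv_rev, cs.inv_simple, cs.simple_mul_simple_self]
    · apply List.map_congr_left
      intro r _
      rw [cs.wordProd_cons]
      simp only [Function.comp_apply, MulAut.conj_apply, mul_inv_rev, cs.inv_simple]
      simp [mul_assoc, cs.simple_mul_simple_self]

lemma nn_refl {t : W} (ht : cs.IsReflection t) : nn cs t t = 1 := by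
  obtain ⟨x, i, rfl⟩ := ht
  obtain ⟨ξ, rfl⟩ := cs.wordProd_surjective x
  set t := π ξ * s i * (π ξ)⁻¹ with hts
  have hω : t = π (ξ ++ ([i] ++ ξ.reverse)) := by
    rw [cs.wordProd_append, cs.wordProd_append, cs.wordProd_reverse, cs.wordProd_singleton, hts]
    rw [mul_assoc]
  rw [hω, nn_wordProd, ris_append, ris_append, zcount_append, zcount_append]
  rw [← hω]
  have hc2 : π ([i] ++ ξ.reverse) = s i * (π ξ)⁻¹ := by
    rw [cs.wordProd_append, cs.wordProd_reverse, cs.wordProd_singleton]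
  -- first block
  have h1 : zcount t ((cs.rightInvSeq ξ).map (fun r => (π ([i] ++ ξ.reverse))⁻¹ * r *
      π ([i] ++ ξ.reverse))) = zcount (s i) (cs.rightInvSeq ξ) := by
    rw [hc2, zcount_map_conj]
    congr 1
    rw [hts]
    simp [mul_assoc, mul_inv_rev, cs.inv_simple, cs.simple_mul_simple_self]
  -- middle block
  have h2 : zcount t ((cs.rightInvSeq [i]).map (fun r => (π ξ.reverse)⁻¹ * r * π ξ.reverse))
      = 1 := by
    rw [cs.rightInvSeq_singleton, List.map_singleton, cs.wordProd_reverse, inv_inv]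
    rw [zcount_cons, if_pos hts.symm, zcount_nil, add_zero]
  -- last block
  have h3 : zcount t (cs.rightInvSeq ξ.reverse) = zcount (s i) (cs.rightInvSeq ξ) := by
    rw [cs.rightInvSeq_reverse, zcount_reverse, lis_eq_map_ris, zcount_map_conj']
    congr 1
    rw [hts]
    simp [mul_assoc]
  rw [h1, h2, h3]
  rw [show ∀ a : ZMod 2, a + (1 + a) = 1 by decide]

lemma inversion_of_nn_eq_one {w t : W} (h : nn cs w t = 1) : cs.IsRightInversion w t := by
  obtain ⟨ω, hred, rfl⟩ := cs.exists_reduced_word' w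
  apply cs.isRightInversion_of_mem_rightInvSeq hred
  apply mem_of_zcount_ne_zero (t := t)
  rw [← nn_wordProd, h]
  exact one_ne_zero

lemma reflection_of_nn_eq_one {w t : W} (h : nn cs w t = 1) : cs.IsReflection t :=
  (inversion_of_nn_eq_one cs h).1

lemma nn_of_isRightInversion {w t : W} (ht : cs.IsRightInversion w t) : nn cs w t = 1 := by
  rcases zmod2_cases (nn cs w t) with h0 | h1
  · exfalso
    have hmul : nn cs (w * t) t = nn cs t t + nn cs w (t * t * t⁻¹) := nn_mul cs w t t
    have htt : t * t * t⁻¹ = t := by group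
    rw [htt, h0, add_zero, nn_refl cs ht.1] at hmul
    have hinv2 := inversion_of_nn_eq_one cs hmul
    have : w * t * t = w := by rw [mul_assoc, ht.1.mul_self, mul_one]
    have h2 := hinv2.2
    rw [this] at h2
    exact absurd ht.2 (by omega)
  · exact h1

lemma mem_ris_of_nn_eq_one {ω : List B} {t : W} (h : nn cs (π ω) t = 1) :
    t ∈ cs.rightInvSeq ω := by
  apply mem_of_zcount_ne_zero (t := t)
  rw [← nn_wordProd, h]
  exact one_ne_zero

/-! ### Inversion sets and length -/

def invSet (w : W) : Set W := {t | cs.IsRightInversion w t}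

lemma invSet_eq_ris {ω : List B} (hred : cs.IsReduced ω) :
    invSet cs (π ω) = {t | t ∈ cs.rightInvSeq ω} := by
  ext t
  constructor
  · intro ht
    exact mem_ris_of_nn_eq_one cs (nn_of_isRightInversion cs ht)
  · intro ht
    exact cs.isRightInversion_of_mem_rightInvSeq hred ht

lemma length_eq_ncard_invSet (w : W) : ℓ w = (invSet cs w).ncard := by
  obtain ⟨ω, hred, rfl⟩ := cs.exists_reduced_word' w
  rw [invSet_eq_ris cs hred]
  have : {t | t ∈ cs.rightInvSeq ω} = ((cs.rightInvSeq ω).toFinset : Set W) := by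
    ext t; simp
  rw [this, Set.ncard_coe_finset, List.toFinset_card_of_nodup hred.nodup_rightInvSeq,
    cs.length_rightInvSeq]
  exact hred


/-! ### Standard parabolic subgroups -/

lemma word_mem_par (I : Set B) (ω : List B) (h : ∀ b ∈ ω, b ∈ I) :
    π ω ∈ Subgroup.closure (cs.simple '' I) := by
  induction ω with
  | nil => rw [cs.wordProd_nil]; exact one_mem _
  | cons i ω ih =>
    rw [cs.wordProd_cons]
    exact mul_mem (Subgroup.subset_closure ⟨i, h i List.mem_cons_self, rfl⟩)
      (ih (fun b hb => h b (List.mem_cons_of_mem i hb)))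

lemma exists_word_of_mem_par (I : Set B) (w : W) (hw : w ∈ Subgroup.closure (cs.simple '' I)) :
    ∃ ω : List B, (∀ b ∈ ω, b ∈ I) ∧ w = π ω := by
  induction hw using Subgroup.closure_induction with
  | mem x hx =>
    obtain ⟨i, hi, rfl⟩ := hx
    exact ⟨[i], by simpa using hi, (cs.wordProd_singleton i).symm⟩
  | one => exact ⟨[], by simp, (cs.wordProd_nil).symm⟩
  | mul x y hx hy ihx ihy =>
    obtain ⟨ω₁, h₁, rfl⟩ := ihx
    obtain ⟨ω₂, h₂, rfl⟩ := ihy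
    exact ⟨ω₁ ++ ω₂, fun b hb => (List.mem_append.mp hb).elim (h₁ b) (h₂ b),
      (cs.wordProd_append ω₁ ω₂).symm⟩
  | inv x hx ihx =>
    obtain ⟨ω, h₁, rfl⟩ := ihx
    exact ⟨ω.reverse, fun b hb => h₁ b (List.mem_reverse.mp hb),
      (cs.wordProd_reverse ω).symm⟩

/-- Deletion: a non-reduced word can be shortened by two letters. -/
lemma shorten_word (ω : List B) (hnr : ¬ cs.IsReduced ω) :
    ∃ ω' : List B, (∀ b ∈ ω', b ∈ ω) ∧ π ω' = π ω ∧ ω'.length + 2 = ω.length := by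
  have hex : ∃ k, ¬ cs.IsReduced (ω.take (k + 1)) := by
    rcases Nat.eq_zero_or_pos ω.length with h0 | hpos
    · exfalso
      apply hnr
      rw [List.length_eq_zero_iff.mp h0]
      simp [CoxeterSystem.IsReduced]
    · exact ⟨ω.length - 1, by rwa [show ω.length - 1 + 1 = ω.length by omega,
        List.take_length]⟩
  set k := Nat.find hex with hkdef
  have hspec : ¬ cs.IsReduced (ω.take (k + 1)) := Nat.find_spec hex
  have hklen : k < ω.length := by
    by_contra hge
    push_neg at hge
    rcases Nat.eq_zero_or_pos k with hk0 | hkpos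
    · apply hspec
      have hω : ω = [] := List.length_eq_zero_iff.mp (by omega)
      rw [hω]
      simp [CoxeterSystem.IsReduced]
    · have := Nat.find_min hex (m := k - 1) (by omega)
      push_neg at this
      apply hspec
      rw [List.take_of_length_le (by omega)]
      rwa [List.take_of_length_le (by omega)] at this
  have hredk : cs.IsReduced (ω.take k) := by
    rcases Nat.eq_zero_or_pos k with hk0 | hkpos
    · rw [hk0]
      simp [CoxeterSystem.IsReduced]
    · have := Nat.find_min hex (m := k - 1) (by omega)
      push_neg at this
      rwa [show k - 1 + 1 = k by omega] at this
  set i₀ := ω[k] with hi₀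
  have htake : ω.take (k + 1) = ω.take k ++ [i₀] := by
    rw [List.take_succ, List.getElem?_eq_getElem hklen]
    rfl
  have hlenk : (ω.take k).length = k := by
    rw [List.length_take]; omega
  have hlw : ℓ (π (ω.take k)) = k := by
    have h : ℓ (π (ω.take k)) = (ω.take k).length := hredk
    omega
  have hlt : ℓ (π (ω.take k) * s i₀) < ℓ (π (ω.take k)) := by
    rcases cs.length_mul_simple (π (ω.take k)) i₀ with h | h
    · exfalso
      apply hspec
      rw [htake]
      show ℓ (π (ω.take k ++ [i₀])) = (ω.take k ++ [i₀]).length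
      rw [cs.wordProd_append, cs.wordProd_singleton, h, List.length_append,
        List.length_singleton, hlenk, hlw]
    · omega
  have hinv : cs.IsRightInversion (π (ω.take k)) (s i₀) :=
    ⟨cs.isReflection_simple i₀, hlt⟩
  have hmem : s i₀ ∈ cs.rightInvSeq (ω.take k) :=
    mem_ris_of_nn_eq_one cs (nn_of_isRightInversion cs hinv)
  obtain ⟨j, hj, hgd⟩ := List.mem_iff_getElem.mp hmem
  have hjk : j < k := by
    rwa [cs.length_rightInvSeq, hlenk] at hj
  have herase : π (ω.take k) * s i₀ = π ((ω.take k).eraseIdx j) := by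
    rw [← cs.wordProd_mul_getD_rightInvSeq, List.getD_eq_getElem _ 1 hj, hgd]
  refine ⟨(ω.take k).eraseIdx j ++ ω.drop (k + 1), ?_, ?_, ?_⟩
  · intro b hb
    rcases List.mem_append.mp hb with hb | hb
    · exact List.take_subset k ω (List.mem_of_mem_eraseIdx hb)
    · exact List.drop_subset _ ω hb
  · rw [cs.wordProd_append, ← herase]
    have : π ω = π (ω.take (k + 1) ++ ω.drop (k + 1)) := by rw [List.take_append_drop]
    rw [this, cs.wordProd_append, htake, cs.wordProd_append, cs.wordProd_singleton, mul_assoc]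
  · have h5 : ((ω.take k).eraseIdx j).length + 1 = (ω.take k).length :=
      List.length_eraseIdx_add_one (by omega)
    rw [List.length_append, List.length_drop]
    omega

lemma exists_reduced_subword (ω : List B) :
    ∃ ω' : List B, (∀ b ∈ ω', b ∈ ω) ∧ cs.IsReduced ω' ∧ π ω' = π ω := by
  by_cases h : cs.IsReduced ω
  · exact ⟨ω, fun b hb => hb, h, rfl⟩
  · obtain ⟨ω₀, hsub, hprod, hlen⟩ := shorten_word cs ω h
    have : ω₀.length < ω.length := by omega
    obtain ⟨ω', hsub', hred', hprod'⟩ := exists_reduced_subword ω₀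
    exact ⟨ω', fun b hb => hsub b (hsub' b hb), hred', by rw [hprod', hprod]⟩
termination_by ω.length

lemma exists_reduced_word_of_mem_par (I : Set B) (w : W)
    (hw : w ∈ Subgroup.closure (cs.simple '' I)) :
    ∃ ω : List B, (∀ b ∈ ω, b ∈ I) ∧ cs.IsReduced ω ∧ w = π ω := by
  obtain ⟨ω, hmem, rfl⟩ := exists_word_of_mem_par cs I w hw
  obtain ⟨ω', hsub, hred, hprod⟩ := exists_reduced_subword cs ω
  exact ⟨ω', fun b hb => hmem b (hsub b hb), hred, hprod.symm⟩

lemma ris_mem_par (I : Set B) (ω : List B) (h : ∀ b ∈ ω, b ∈ I) :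
    ∀ t ∈ cs.rightInvSeq ω, t ∈ Subgroup.closure (cs.simple '' I) := by
  induction ω with
  | nil => simp
  | cons i ω ih =>
    intro t ht
    rw [rightInvSeq_cons] at ht
    rcases List.mem_cons.mp ht with rfl | ht'
    · have hω : π ω ∈ Subgroup.closure (cs.simple '' I) :=
        word_mem_par cs I ω (fun b hb => h b (List.mem_cons_of_mem i hb))
      exact mul_mem (mul_mem (inv_mem hω)
        (Subgroup.subset_closure ⟨i, h i List.mem_cons_self, rfl⟩)) hω
    · exact ih (fun b hb => h b (List.mem_cons_of_mem i hb)) t ht'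

lemma refl_mem_par {I : Set B} {w t : W} (hw : w ∈ Subgroup.closure (cs.simple '' I))
    (h : nn cs w t = 1) : t ∈ Subgroup.closure (cs.simple '' I) := by
  obtain ⟨ω, hmem, rfl⟩ := exists_word_of_mem_par cs I w hw
  exact ris_mem_par cs I ω hmem t (mem_ris_of_nn_eq_one cs h)

/-! ### The longest element -/

/-- The set of reflections lying in the standard parabolic subgroup. -/
def RP (I : Set B) : Set W :=
  {t : W | cs.IsReflection t ∧ t ∈ Subgroup.closure (cs.simple '' I)}

lemma invSet_subset_RP {I : Set B} {w : W} (hw : w ∈ Subgroup.closure (cs.simple '' I)) :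
    invSet cs w ⊆ RP cs I :=
  fun t ht => ⟨ht.1, refl_mem_par cs hw (nn_of_isRightInversion cs ht)⟩

section Longest

variable {I : Set B} {u : W}
  (huI : u ∈ Subgroup.closure (cs.simple '' I))
  (hulong : ∀ p ∈ Subgroup.closure (cs.simple '' I), cs.length p ≤ cs.length u)

include huI hulong

lemma RP_subset_invSet : RP cs I ⊆ invSet cs u := by
  rintro t ⟨htr, htP⟩
  refine ⟨htr, ?_⟩
  exact lt_of_le_of_ne (hulong _ (mul_mem huI htP)) (htr.length_mul_left_ne u)

lemma invSet_u_eq : invSet cs u = RP cs I :=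
  Set.Subset.antisymm (invSet_subset_RP cs huI) (RP_subset_invSet cs huI hulong)

lemma nn_u_eq_one {t : W} (ht : t ∈ RP cs I) : nn cs u t = 1 :=
  nn_of_isRightInversion cs (RP_subset_invSet cs huI hulong ht)

omit hulong in
lemma RP_finite (hI : Finite ↥(Subgroup.closure (cs.simple '' I))) : (RP cs I).Finite := by
  have h1 : ((Subgroup.closure (cs.simple '' I) : Subgroup W) : Set W).Finite :=
    Set.finite_coe_iff.mp hI
  exact h1.subset (fun t ht => ht.2)

variable (hI : Finite ↥(Subgroup.closure (cs.simple '' I)))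
include hI

lemma length_u_mul {p : W} (hp : p ∈ Subgroup.closure (cs.simple '' I)) :
    ℓ (u * p) + ℓ p = ℓ u := by
  have hRP : (RP cs I).Finite := RP_finite cs huI hI
  have hsub : invSet cs p ⊆ RP cs I := invSet_subset_RP cs hp
  have hup : u * p ∈ Subgroup.closure (cs.simple '' I) := mul_mem huI hp
  have hinvset : invSet cs (u * p) = RP cs I \ invSet cs p := by
    ext t
    constructor
    · intro ht
      have htRP : t ∈ RP cs I := invSet_subset_RP cs hup ht
      refine ⟨htRP, fun htp => ?_⟩
      have h1 : nn cs (u * p) t = 1 := nn_of_isRightInversion cs ht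
      have h2 : nn cs (u * p) t = nn cs p t + nn cs u (p * t * p⁻¹) := nn_mul cs u p t
      have h3 : nn cs u (p * t * p⁻¹) = 1 := by
        apply nn_u_eq_one cs huI hulong
        exact ⟨htRP.1.conj p, mul_mem (mul_mem hp htRP.2) (inv_mem hp)⟩
      have h4 : nn cs p t = 1 := nn_of_isRightInversion cs htp
      rw [h2, h3, h4] at h1
      exact absurd h1 (by decide)
    · rintro ⟨⟨htr, htP⟩, htnot⟩
      have h4 : nn cs p t = 0 := by
        rcases zmod2_cases (nn cs p t) with h | h
        · exact h
        · exact absurd (inversion_of_nn_eq_one cs h) htnot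
      have h3 : nn cs u (p * t * p⁻¹) = 1 := by
        apply nn_u_eq_one cs huI hulong
        exact ⟨htr.conj p, mul_mem (mul_mem hp htP) (inv_mem hp)⟩
      have h2 : nn cs (u * p) t = nn cs p t + nn cs u (p * t * p⁻¹) := nn_mul cs u p t
      rw [h3, h4, zero_add] at h2
      exact inversion_of_nn_eq_one cs h2
  have e1 : ℓ (u * p) = (RP cs I \ invSet cs p).ncard := by
    rw [length_eq_ncard_invSet, hinvset]
  have e2 : ℓ p = (invSet cs p).ncard := length_eq_ncard_invSet cs p
  have e3 : ℓ u = (RP cs I).ncard := by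
    rw [length_eq_ncard_invSet, invSet_u_eq cs huI hulong]
  have e4 : (RP cs I \ invSet cs p).ncard = (RP cs I).ncard - (invSet cs p).ncard :=
    Set.ncard_diff hsub (hRP.subset hsub)
  have e5 : (invSet cs p).ncard ≤ (RP cs I).ncard :=
    Set.ncard_le_ncard hsub hRP
  omega

lemma u_mul_self : u * u = 1 := by
  have := length_u_mul cs huI hulong hI huI
  have h0 : ℓ (u * u) = 0 := by omega
  exact cs.length_eq_zero_iff.mp h0

lemma u_unique {p : W} (hp : p ∈ Subgroup.closure (cs.simple '' I)) (hlen : ℓ p = ℓ u) :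
    p = u := by
  have := length_u_mul cs huI hulong hI hp
  have h0 : ℓ (u * p) = 0 := by omega
  have h1 : u * p = 1 := cs.length_eq_zero_iff.mp h0
  have h2 := u_mul_self cs huI hulong hI
  calc p = (u * u) * p := by rw [h2, one_mul]
    _ = u * (u * p) := by rw [mul_assoc]
    _ = u := by rw [h1, mul_one]

end Longest

lemma simple_of_length_one {I : Set B} {w : W} (hw : w ∈ Subgroup.closure (cs.simple '' I))
    (h : ℓ w = 1) : w ∈ cs.simple '' I := by
  obtain ⟨ω, hmem, hred, rfl⟩ := exists_reduced_word_of_mem_par cs I w hw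
  have hl : ω.length = 1 := by rw [← hred]; exact h
  obtain ⟨b, rfl⟩ := List.length_eq_one_iff.mp hl
  exact ⟨b, hmem b (List.mem_singleton_self b), (cs.wordProd_singleton b).symm⟩


/-! ### Minimal length conjugators -/

lemma lmul_word (K : Set B) (z : W)
    (hz : ∀ r : W, cs.IsReflection r → r ∈ Subgroup.closure (cs.simple '' K) →
      ¬ cs.IsRightInversion z r) (ω : List B) :
    (∀ b ∈ ω, b ∈ K) → cs.IsReduced ω → ℓ (z * π ω) = ℓ z + ω.length := by
  induction ω using List.reverseRecOn with
  | nil => intro _ _; simp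
  | append_singleton ω i ih =>
    intro hmem hred
    have hω : cs.IsReduced ω := by
      have := hred.take ω.length
      rwa [List.take_left] at this
    have hmemω : ∀ b ∈ ω, b ∈ K := fun b hb => hmem b (List.mem_append_left _ hb)
    have ihv := ih hmemω hω
    have hωlen : ℓ (π ω) = ω.length := hω
    have hredlen : ℓ (π (ω ++ [i])) = ω.length + 1 := by
      have h' : ℓ (π (ω ++ [i])) = (ω ++ [i]).length := hred
      rw [h', List.length_append, List.length_singleton]
    have hne : ¬ cs.IsRightInversion (z * π ω) (s i) := by
      intro hinv
      have h1 : nn cs (z * π ω) (s i) = 1 := nn_of_isRightInversion cs hinv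
      have h2 : nn cs (z * π ω) (s i) = nn cs (π ω) (s i) + nn cs z (π ω * s i * (π ω)⁻¹) :=
        nn_mul cs z (π ω) (s i)
      have h3 : nn cs (π ω) (s i) = 0 := by
        rcases zmod2_cases (nn cs (π ω) (s i)) with h | h
        · exact h
        · exfalso
          have hri := inversion_of_nn_eq_one cs h
          have heq : π ω * s i = π (ω ++ [i]) := by
            rw [cs.wordProd_append, cs.wordProd_singleton]
          have h5 := hri.2
          rw [heq, hredlen, hωlen] at h5
          omega
      rw [h3, zero_add] at h2
      have hrrefl : cs.IsReflection (π ω * s i * (π ω)⁻¹) := ⟨π ω, i, rfl⟩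
      have hrP : π ω * s i * (π ω)⁻¹ ∈ Subgroup.closure (cs.simple '' K) := by
        have hωP : π ω ∈ Subgroup.closure (cs.simple '' K) := word_mem_par cs K ω hmemω
        exact mul_mem (mul_mem hωP (Subgroup.subset_closure
          ⟨i, hmem i (List.mem_append_right _ (List.mem_singleton_self i)), rfl⟩)) (inv_mem hωP)
      exact hz _ hrrefl hrP (inversion_of_nn_eq_one cs (by rw [← h2]; exact h1))
    have hlen : ℓ (z * π ω * s i) = ℓ (z * π ω) + 1 := by
      rcases cs.length_mul_simple (z * π ω) i with h | h
      · exact h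
      · exact absurd ⟨cs.isReflection_simple i, by omega⟩ hne
    rw [cs.wordProd_append, cs.wordProd_singleton, ← mul_assoc, hlen, ihv,
      List.length_append, List.length_singleton]
    omega

lemma length_mul_par {K : Set B} {z : W}
    (hz : ∀ r : W, cs.IsReflection r → r ∈ Subgroup.closure (cs.simple '' K) →
      ¬ cs.IsRightInversion z r) {p : W} (hp : p ∈ Subgroup.closure (cs.simple '' K)) :
    ℓ (z * p) = ℓ z + ℓ p := by
  obtain ⟨ω, hmem, hred, rfl⟩ := exists_reduced_word_of_mem_par cs K p hp
  have hred' : ℓ (π ω) = ω.length := hred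
  rw [lmul_word cs K z hz ω hmem hred, hred']

lemma conj_simple_of_min (I J : Set B) (u v x : W)
    (huI : u ∈ Subgroup.closure (cs.simple '' I))
    (hulong : ∀ p ∈ Subgroup.closure (cs.simple '' I), cs.length p ≤ cs.length u)
    (hucent : ∀ p ∈ Subgroup.closure (cs.simple '' I), u * p = p * u)
    (hvJ : v ∈ Subgroup.closure (cs.simple '' J))
    (hvcent : ∀ p ∈ Subgroup.closure (cs.simple '' J), v * p = p * v)
    (hx : x * u * x⁻¹ = v)
    (hmin : ∀ y : W, y * u * y⁻¹ = v → ℓ x ≤ ℓ y) :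
    ∀ i ∈ I, x * s i * x⁻¹ ∈ cs.simple '' J := by
  have hC1 : ∀ r : W, cs.IsReflection r → r ∈ Subgroup.closure (cs.simple '' I) →
      ¬ cs.IsRightInversion x r := by
    intro r hr hrP hinv
    have hcomm : r * u * r⁻¹ = u := by rw [← hucent r hrP]; group
    have hy : (x * r) * u * (x * r)⁻¹ = v := by
      calc (x * r) * u * (x * r)⁻¹ = x * (r * u * r⁻¹) * x⁻¹ := by group
        _ = x * u * x⁻¹ := by rw [hcomm]
        _ = v := hx
    have h1 := hmin _ hy
    have h2 := hinv.2
    omega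
  have hC2 : ∀ r : W, cs.IsReflection r → r ∈ Subgroup.closure (cs.simple '' J) →
      ¬ cs.IsRightInversion x⁻¹ r := by
    intro r hr hrQ hinv
    have hcomm : r * v * r⁻¹ = v := by rw [← hvcent r hrQ]; group
    have hy : (r * x) * u * (r * x)⁻¹ = v := by
      calc (r * x) * u * (r * x)⁻¹ = r * (x * u * x⁻¹) * r⁻¹ := by group
        _ = v := by rw [hx, hcomm]
    have h1 := hmin _ hy
    have h2 : ℓ (r * x) = ℓ (x⁻¹ * r) := by
      rw [← cs.length_inv (r * x), mul_inv_rev, hr.inv]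
    have h3 := hinv.2
    rw [cs.length_inv] at h3
    omega
  intro i hi
  have hsiP : s i ∈ Subgroup.closure (cs.simple '' I) := Subgroup.subset_closure ⟨i, hi, rfl⟩
  have ht : cs.IsReflection (x * s i * x⁻¹) := ⟨x, i, rfl⟩
  have hxtx : x⁻¹ * (x * s i * x⁻¹) * (x⁻¹)⁻¹ = s i := by group
  have hxtx' : x⁻¹ * (x * s i * x⁻¹) * x = s i := by group
  have husiu : u * s i * u⁻¹ = s i := by rw [hucent _ hsiP]; group
  have hnusi : nn cs u (s i) = 1 :=
    nn_u_eq_one cs huI hulong ⟨cs.isReflection_simple i, hsiP⟩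
  have hvt : nn cs v (x * s i * x⁻¹) = 1 := by
    have e1 : nn cs v (x * s i * x⁻¹) = nn cs x⁻¹ (x * s i * x⁻¹) +
        nn cs (x * u) (x⁻¹ * (x * s i * x⁻¹) * (x⁻¹)⁻¹) := by
      rw [← hx]; exact nn_mul cs (x * u) x⁻¹ (x * s i * x⁻¹)
    rw [hxtx] at e1
    have e2 : nn cs (x * u) (s i) = nn cs u (s i) + nn cs x (u * s i * u⁻¹) :=
      nn_mul cs x u (s i)
    rw [husiu, hnusi] at e2
    have e3 : nn cs x⁻¹ (x * s i * x⁻¹) = nn cs x (s i) := by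
      rw [nn_inv cs x (x * s i * x⁻¹), hxtx']
    rw [e1, e2, e3]
    rw [show ∀ a : ZMod 2, a + (1 + a) = 1 by decide]
  have htQ : x * s i * x⁻¹ ∈ Subgroup.closure (cs.simple '' J) := refl_mem_par cs hvJ hvt
  have hlen1 : ℓ (x * s i) = ℓ x + 1 := by
    have := length_mul_par cs hC1 hsiP
    rwa [cs.length_simple] at this
  have hlen2 : ℓ (x⁻¹ * (x * s i * x⁻¹)) = ℓ x⁻¹ + ℓ (x * s i * x⁻¹) :=
    length_mul_par cs hC2 htQ
  have hxt : x⁻¹ * (x * s i * x⁻¹) = s i * x⁻¹ := by group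
  have hlen3 : ℓ (s i * x⁻¹) = ℓ (x * s i) := by
    rw [← cs.length_inv (s i * x⁻¹), mul_inv_rev, inv_inv, cs.inv_simple]
  have hlenx : ℓ (x⁻¹ : W) = ℓ x := cs.length_inv x
  have hlt1 : ℓ (x * s i * x⁻¹) = 1 := by
    rw [hxt, hlen3, hlen1, hlenx] at hlen2
    omega
  exact simple_of_length_one cs htQ hlt1

lemma longest_conj_eq (I J : Set B) (u v w : W)
    (huI : u ∈ Subgroup.closure (cs.simple '' I))
    (hulong : ∀ p ∈ Subgroup.closure (cs.simple '' I), cs.length p ≤ cs.length u)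
    (hucent : ∀ p ∈ Subgroup.closure (cs.simple '' I), u * p = p * u)
    (hvJ : v ∈ Subgroup.closure (cs.simple '' J))
    (hvlong : ∀ p ∈ Subgroup.closure (cs.simple '' J), cs.length p ≤ cs.length v)
    (hJ : Finite ↥(Subgroup.closure (cs.simple '' J)))
    (himg : (fun g => w * g * w⁻¹) '' (cs.simple '' I) = cs.simple '' J) :
    w * u * w⁻¹ = v := by
  have hfwd : ∀ g ∈ Subgroup.closure (cs.simple '' I),
      w * g * w⁻¹ ∈ Subgroup.closure (cs.simple '' J) := by
    intro g hg
    induction hg using Subgroup.closure_induction with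
    | mem y hy =>
      apply Subgroup.subset_closure
      rw [← himg]
      exact ⟨y, hy, rfl⟩
    | one => simpa using one_mem _
    | mul a b ha hb iha ihb =>
      have h : w * (a * b) * w⁻¹ = (w * a * w⁻¹) * (w * b * w⁻¹) := by group
      rw [h]; exact mul_mem iha ihb
    | inv a ha iha =>
      have h : w * a⁻¹ * w⁻¹ = (w * a * w⁻¹)⁻¹ := by group
      rw [h]; exact inv_mem iha
  have hbwd : ∀ g ∈ Subgroup.closure (cs.simple '' J),
      w⁻¹ * g * w ∈ Subgroup.closure (cs.simple '' I) := by
    intro g hg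
    induction hg using Subgroup.closure_induction with
    | mem y hy =>
      rw [← himg] at hy
      obtain ⟨σ, hσI, rfl⟩ := hy
      have h : w⁻¹ * (w * σ * w⁻¹) * w = σ := by group
      rw [h]; exact Subgroup.subset_closure hσI
    | one => simpa using one_mem _
    | mul a b ha hb iha ihb =>
      have h : w⁻¹ * (a * b) * w = (w⁻¹ * a * w) * (w⁻¹ * b * w) := by group
      rw [h]; exact mul_mem iha ihb
    | inv a ha iha =>
      have h : w⁻¹ * a⁻¹ * w = (w⁻¹ * a * w)⁻¹ := by group
      rw [h]; exact inv_mem iha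
  have hu' : w * u * w⁻¹ ∈ Subgroup.closure (cs.simple '' J) := hfwd u huI
  have hnn : ∀ t ∈ RP cs J, nn cs (w * u * w⁻¹) t = 1 := by
    rintro t ⟨htr, htQ⟩
    have hr : cs.IsReflection (w⁻¹ * t * w) := by
      have := htr.conj w⁻¹
      rwa [inv_inv] at this
    have hrP : w⁻¹ * t * w ∈ Subgroup.closure (cs.simple '' I) := hbwd t htQ
    have h1 : nn cs u (w⁻¹ * t * w) = 1 := nn_u_eq_one cs huI hulong ⟨hr, hrP⟩
    have hucomm : u * (w⁻¹ * t * w) * u⁻¹ = w⁻¹ * t * w := by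
      rw [hucent _ hrP]; group
    have e1 : nn cs ((w * u) * w⁻¹) t = nn cs w⁻¹ t +
        nn cs (w * u) (w⁻¹ * t * (w⁻¹)⁻¹) := nn_mul cs (w * u) w⁻¹ t
    rw [inv_inv] at e1
    have e2 : nn cs (w * u) (w⁻¹ * t * w) = nn cs u (w⁻¹ * t * w) +
        nn cs w (u * (w⁻¹ * t * w) * u⁻¹) := nn_mul cs w u (w⁻¹ * t * w)
    rw [hucomm, h1] at e2
    have e3 : nn cs w⁻¹ t = nn cs w (w⁻¹ * t * w) := nn_inv cs w t
    rw [e1, e2, e3]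
    rw [show ∀ a : ZMod 2, a + (1 + a) = 1 by decide]
  have hinvu' : invSet cs (w * u * w⁻¹) = RP cs J :=
    Set.Subset.antisymm (invSet_subset_RP cs hu')
      (fun t ht => inversion_of_nn_eq_one cs (hnn t ht))
  have hlenu' : ℓ (w * u * w⁻¹) = ℓ v := by
    rw [length_eq_ncard_invSet cs, hinvu', ← invSet_u_eq cs hvJ hvlong,
      ← length_eq_ncard_invSet]
  exact u_unique cs hvJ hvlong hJ hu' hlenu'

end CoxRich

open CoxRich in
/-- (Richardson) Let `W_I` and `W_J` be finite standard parabolic subgroups whose longest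
elements `u = w₀(I)` and `v = w₀(J)` are central in `W_I` resp. `W_J`.  Then `u` and `v` are
conjugate in `W` if and only if the subsets `I` and `J` of `W` (i.e. the corresponding sets of
simple reflections) are conjugate in `W`. -/
theorem stmt_8 {B W : Type*} [Group W] {M : CoxeterMatrix B} (cs : CoxeterSystem M W)
    (I J : Set B)
    (hI : Finite ↥(Subgroup.closure (cs.simple '' I)))
    (hJ : Finite ↥(Subgroup.closure (cs.simple '' J)))
    (u v : W)
    (huI : u ∈ Subgroup.closure (cs.simple '' I))
    (hulong : ∀ p ∈ Subgroup.closure (cs.simple '' I), cs.length p ≤ cs.length u)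
    (hucent : ∀ p ∈ Subgroup.closure (cs.simple '' I), u * p = p * u)
    (hvJ : v ∈ Subgroup.closure (cs.simple '' J))
    (hvlong : ∀ p ∈ Subgroup.closure (cs.simple '' J), cs.length p ≤ cs.length v)
    (hvcent : ∀ p ∈ Subgroup.closure (cs.simple '' J), v * p = p * v) :
    IsConj u v ↔
      ∃ w : W, (fun x => w * x * w⁻¹) '' (cs.simple '' I) = cs.simple '' J := by
  classical
  constructor
  · intro hconj
    obtain ⟨c, hc⟩ := isConj_iff.mp hconj
    have hex : ∃ n : ℕ, ∃ y : W, y * u * y⁻¹ = v ∧ cs.length y = n :=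
      ⟨cs.length c, c, hc, rfl⟩
    obtain ⟨x, hx, hxlen⟩ := Nat.find_spec hex
    have hmin : ∀ y : W, y * u * y⁻¹ = v → cs.length x ≤ cs.length y := by
      intro y hy
      rw [hxlen]
      exact Nat.find_min' hex ⟨y, hy, rfl⟩
    refine ⟨x, ?_⟩
    ext σ
    simp only [Set.mem_image]
    constructor
    · rintro ⟨g, hg, rfl⟩
      obtain ⟨i, hi, rfl⟩ := hg
      exact conj_simple_of_min cs I J u v x huI hulong hucent hvJ hvcent hx hmin i hi
    · intro hσ
      obtain ⟨j, hj, rfl⟩ := hσ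
      have hx' : x⁻¹ * v * (x⁻¹)⁻¹ = u := by rw [inv_inv, ← hx]; group
      have hmin' : ∀ y : W, y * v * y⁻¹ = u → cs.length x⁻¹ ≤ cs.length y := by
        intro y hy
        have h2 : y⁻¹ * u * (y⁻¹)⁻¹ = v := by rw [inv_inv, ← hy]; group
        have h3 := hmin _ h2
        rw [cs.length_inv] at h3
        rw [cs.length_inv]
        exact h3
      have hmem := conj_simple_of_min cs J I v u x⁻¹ hvJ hvlong hvcent huI hucent hx' hmin' j hj
      rw [inv_inv] at hmem
      exact ⟨x⁻¹ * cs.simple j * x, hmem, by group⟩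
  · rintro ⟨w, himg⟩
    exact isConj_iff.mpr
      ⟨w, longest_conj_eq cs I J u v w huI hulong hucent hvJ hvlong hJ himg⟩
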